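/- Let X_1, …, X_N be i.i.d. Bernoulli random variables with success probability p ≤ e^{−nβ}, where N = e^{nα}, n is a positive integer, α > 0, β ≥ α, and ρ > 0. Then E[(1 + Σ_{i=1}^N X_i)^ρ] ≤ 1 + γ e^{n(α−β)}, where γ = max{e^{e^ρ−1}, (⌈ρ⌉!)² ⌈ρ⌉}. -/

import Mathlib

open MeasureTheory ProbabilityTheory

lemma integrable_of_bounded' {Ω : Type*} [MeasurableSpace Ω] {μ : Measure Ω}
    [IsProbabilityMeasure μ] {f : Ω → ℝ} (hf : Measurable f) (C : ℝ)
    (h0 : ∀ ω, 0 ≤ f ω) (hC : ∀ ω, f ω ≤ C) : Integrable f μ := by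
  refine (integrable_const C).mono' hf.aestronglyMeasurable (ae_of_all _ fun ω => ?_)
  rw [Real.norm_eq_abs, abs_of_nonneg (h0 ω)]
  exact hC ω

/-- IID Bernoulli variables `X 1, …, X N` with success probability `p ≤ e^{−nβ}`,
`N = ⌊e^{nα}⌋`, `n ≥ 1`, `α > 0`, `β ≥ α`, `ρ > 0`:
`E[(1 + ∑ X i)^ρ] ≤ 1 + γ e^{n(α−β)}` with `γ = max{e^{e^ρ−1}, (⌈ρ⌉!)² ⌈ρ⌉}`. -/
theorem binomial_one_add_rpow_moment_le_of_le {Ω : Type*} [MeasurableSpace Ω]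
    (μ : Measure Ω) [IsProbabilityMeasure μ]
    (n : ℕ) (hn : 0 < n) (α β ρ p : ℝ) (hα : 0 < α) (hβ : α ≤ β) (hρ : 0 < ρ)
    (N : ℕ) (hN : N = ⌊Real.exp (n * α)⌋₊)
    (X : Fin N → Ω → ℝ) (hmeas : ∀ i, Measurable (X i))
    (hval : ∀ i ω, X i ω = 0 ∨ X i ω = 1)
    (hindep : iIndepFun X μ)
    (hid : ∀ i, μ {ω | X i ω = 1} = ENNReal.ofReal p)
    (hp : p ≤ Real.exp (-(n * β))) :
    ∫ ω, (1 + ∑ i, X i ω) ^ ρ ∂μ ≤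
      1 + max (Real.exp (Real.exp ρ - 1)) (((Nat.factorial ⌈ρ⌉₊ : ℝ)) ^ 2 * (⌈ρ⌉₊ : ℝ))
            * Real.exp (n * (α - β)) := by
  set c : ℝ := Real.exp ρ - 1 with hc_def
  have hc0 : 0 ≤ c := by
    have := Real.one_le_exp hρ.le
    simp [hc_def]; linarith
  set q : ℝ := (ENNReal.ofReal p).toReal with hq_def
  have hq0 : 0 ≤ q := ENNReal.toReal_nonneg
  have hq_le : q ≤ Real.exp (-(n * β)) := by
    rw [hq_def, ENNReal.toReal_ofReal']
    exact max_le hp (Real.exp_pos _).le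
  -- the auxiliary functions
  set g : Fin N → Ω → ℝ := fun i ω => 1 + c * X i ω with hg_def
  have hg_meas : ∀ i, Measurable (g i) := fun i =>
    measurable_const.add (measurable_const.mul (hmeas i))
  have hg_bounds : ∀ i ω, 1 ≤ g i ω ∧ g i ω ≤ 1 + c := by
    intro i ω
    rcases hval i ω with h | h <;> simp [hg_def, h, hc0]
  have hg_int : ∀ i, Integrable (g i) μ := fun i =>
    integrable_of_bounded' (hg_meas i) (1 + c)
      (fun ω => le_trans zero_le_one (hg_bounds i ω).1) (fun ω => (hg_bounds i ω).2)
  have hg_indep : iIndepFun g μ :=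
    hindep.comp (fun _ x => 1 + c * x)
      (fun _ => measurable_const.add (measurable_const.mul measurable_id))
  -- pointwise bound
  have hpt : ∀ ω, (1 + ∑ i, X i ω) ^ ρ ≤ ∏ i, g i ω := by
    intro ω
    set S : ℝ := ∑ i, X i ω with hS_def
    have hS0 : 0 ≤ S := Finset.sum_nonneg fun i _ => by
      rcases hval i ω with h | h <;> simp [h]
    have h1 : (1 + S) ^ ρ ≤ Real.exp (ρ * S) := by
      rw [Real.rpow_def_of_pos (by linarith)]
      apply Real.exp_le_exp.2
      have hlog : Real.log (1 + S) ≤ S := by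
        have := Real.log_le_sub_one_of_pos (x := 1 + S) (by linarith)
        linarith
      calc Real.log (1 + S) * ρ ≤ S * ρ := by nlinarith
        _ = ρ * S := mul_comm _ _
    have h2 : Real.exp (ρ * S) = ∏ i, g i ω := by
      rw [hS_def, Finset.mul_sum, Real.exp_sum]
      refine Finset.prod_congr rfl fun i _ => ?_
      rcases hval i ω with h | h <;> simp [hg_def, h, Real.exp_zero, hc_def]
    rw [h2] at h1; exact h1
  -- integrability of the product
  have hprod_meas : Measurable (fun ω => ∏ i, g i ω) :=
    Finset.measurable_prod _ fun i _ => hg_meas i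
  have hprod_nonneg : ∀ ω, 0 ≤ ∏ i, g i ω := fun ω =>
    Finset.prod_nonneg fun i _ => le_trans zero_le_one (hg_bounds i ω).1
  have hprod_le : ∀ ω, ∏ i, g i ω ≤ (1 + c) ^ N := by
    intro ω
    calc ∏ i, g i ω ≤ ∏ _i : Fin N, (1 + c) :=
          Finset.prod_le_prod (fun i _ => le_trans zero_le_one (hg_bounds i ω).1)
            (fun i _ => (hg_bounds i ω).2)
      _ = (1 + c) ^ N := by simp
  have hprod_int : Integrable (fun ω => ∏ i, g i ω) μ :=
    integrable_of_bounded' hprod_meas _ hprod_nonneg hprod_le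
  -- product of integrals by independence
  have hsplit : ∀ s : Finset (Fin N),
      ∫ ω, ∏ i ∈ s, g i ω ∂μ = ∏ i ∈ s, ∫ ω, g i ω ∂μ := by
    intro s
    induction s using Finset.induction_on with
    | empty => simp
    | @insert a s ha ih =>
      have hindep' : IndepFun (∏ j ∈ s, g j) (g a) μ :=
        hg_indep.indepFun_finsetProd_of_notMem hg_meas ha
      have hintS : Integrable (fun ω => ∏ i ∈ s, g i ω) μ := by
        refine integrable_of_bounded' (Finset.measurable_prod _ fun i _ => hg_meas i)
          ((1 + c) ^ s.card) (fun ω => Finset.prod_nonneg fun i _ =>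
            le_trans zero_le_one (hg_bounds i ω).1) (fun ω => ?_)
        calc ∏ i ∈ s, g i ω ≤ ∏ _i ∈ s, (1 + c) :=
              Finset.prod_le_prod (fun i _ => le_trans zero_le_one (hg_bounds i ω).1)
                (fun i _ => (hg_bounds i ω).2)
          _ = (1 + c) ^ s.card := by simp
      have e1 : (∏ j ∈ s, g j) = fun ω => ∏ j ∈ s, g j ω := funext fun ω => by simp
      have key := hindep'.symm.integral_mul_eq_mul_integral (hg_int a).aestronglyMeasurable (e1 ▸ hintS).aestronglyMeasurable
      calc ∫ ω, ∏ i ∈ insert a s, g i ω ∂μ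
          = ∫ ω, (g a * ∏ j ∈ s, g j) ω ∂μ := by
            refine integral_congr_ae (ae_of_all _ fun ω => ?_)
            simp [Finset.prod_insert ha]
        _ = (∫ ω, g a ω ∂μ) * ∫ ω, (∏ j ∈ s, g j) ω ∂μ := key
        _ = ∏ i ∈ insert a s, ∫ ω, g i ω ∂μ := by
            rw [Finset.prod_insert ha, ← ih]
            congr 1
            exact integral_congr_ae (ae_of_all _ fun ω => by simp)
  -- each integral
  have hint_g : ∀ i, ∫ ω, g i ω ∂μ = 1 + c * q := by
    intro i
    have hXind : X i = Set.indicator {ω | X i ω = 1} (1 : Ω → ℝ) := by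
      funext ω
      rcases hval i ω with h | h
      · rw [h, Set.indicator_apply]
        simp only [Set.mem_setOf_eq, h]
        norm_num
      · rw [h, Set.indicator_apply]
        simp [Set.mem_setOf_eq, h]
    have hAs : MeasurableSet {ω | X i ω = 1} := (hmeas i) (measurableSet_singleton 1)
    have hintX : ∫ ω, X i ω ∂μ = q := by
      have h0 : ∫ ω, X i ω ∂μ = ∫ ω, Set.indicator {ω | X i ω = 1} (1 : Ω → ℝ) ω ∂μ :=
        integral_congr_ae (ae_of_all _ fun ω => congrFun hXind ω)
      rw [h0, integral_indicator_one hAs, measureReal_def, hid i]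
    have hXint : Integrable (X i) μ :=
      integrable_of_bounded' (hmeas i) 1
        (fun ω => by rcases hval i ω with h | h <;> simp [h])
        (fun ω => by rcases hval i ω with h | h <;> simp [h])
    rw [hg_def]
    simp only
    rw [integral_add (integrable_const 1) (hXint.const_mul c), integral_const_mul, hintX]
    simp
  -- putting it together
  have h_main : ∫ ω, (1 + ∑ i, X i ω) ^ ρ ∂μ ≤ (1 + c * q) ^ N := by
    calc ∫ ω, (1 + ∑ i, X i ω) ^ ρ ∂μ ≤ ∫ ω, ∏ i, g i ω ∂μ := by
          refine integral_mono_of_nonneg (ae_of_all _ fun ω => ?_) hprod_int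
            (ae_of_all _ hpt)
          refine Real.rpow_nonneg ?_ _
          have hS0 : (0:ℝ) ≤ ∑ i, X i ω := Finset.sum_nonneg fun i _ => by
            rcases hval i ω with h | h <;> simp [h]
          linarith
      _ = ∏ i, ∫ ω, g i ω ∂μ := hsplit Finset.univ
      _ = (1 + c * q) ^ N := by
          rw [Finset.prod_congr rfl fun i _ => hint_g i]; simp
  -- now the scalar estimate
  set t : ℝ := Real.exp (n * (α - β)) with ht_def
  have ht0 : 0 < t := Real.exp_pos _
  have ht1 : t ≤ 1 := by
    rw [ht_def, show (1:ℝ) = Real.exp 0 by simp]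
    apply Real.exp_le_exp.2
    have hn' : (0:ℝ) ≤ n := Nat.cast_nonneg n
    nlinarith
  set s : ℝ := N * q with hs_def
  have hs0 : 0 ≤ s := mul_nonneg (Nat.cast_nonneg N) hq0
  have hNle : (N : ℝ) ≤ Real.exp (n * α) := by
    rw [hN]
    exact Nat.floor_le (Real.exp_pos _).le
  have hst : s ≤ t := by
    rw [hs_def, ht_def]
    calc (N:ℝ) * q ≤ Real.exp (n * α) * Real.exp (-(n * β)) :=
          mul_le_mul hNle hq_le hq0 (Real.exp_pos _).le
      _ = Real.exp (n * (α - β)) := by rw [← Real.exp_add]; ring_nf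
  have hs1 : s ≤ 1 := hst.trans ht1
  have hpow : (1 + c * q) ^ N ≤ Real.exp (c * s) := by
    calc (1 + c * q) ^ N ≤ (Real.exp (c * q)) ^ N := by
          apply pow_le_pow_left₀ (by positivity)
          have := Real.add_one_le_exp (c * q)
          linarith
      _ = Real.exp (N * (c * q)) := by rw [← Real.exp_nat_mul]
      _ = Real.exp (c * s) := by rw [hs_def]; ring_nf
  have hconv : Real.exp (c * s) ≤ 1 + s * (Real.exp c - 1) := by
    have h := convexOn_exp.2 (Set.mem_univ (0:ℝ)) (Set.mem_univ c)
      (by linarith : (0:ℝ) ≤ 1 - s) hs0 (by ring)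
    simp only [smul_eq_mul, mul_zero, zero_add, Real.exp_zero, mul_one] at h
    have : Real.exp (s * c) ≤ (1 - s) + s * Real.exp c := h
    calc Real.exp (c * s) = Real.exp (s * c) := by rw [mul_comm]
      _ ≤ (1 - s) + s * Real.exp c := this
      _ = 1 + s * (Real.exp c - 1) := by ring
  set γ : ℝ := max (Real.exp (Real.exp ρ - 1))
      (((Nat.factorial ⌈ρ⌉₊ : ℝ)) ^ 2 * (⌈ρ⌉₊ : ℝ)) with hγ_def
  have hγ : Real.exp c ≤ γ := le_max_left _ _
  have hfinal : 1 + s * (Real.exp c - 1) ≤ 1 + γ * t := by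
    have h1 : s * (Real.exp c - 1) ≤ t * Real.exp c := by
      have he : (0:ℝ) ≤ Real.exp c - 1 := by
        have := Real.one_le_exp hc0; linarith
      calc s * (Real.exp c - 1) ≤ t * (Real.exp c - 1) := by nlinarith
        _ ≤ t * Real.exp c := by nlinarith [Real.exp_pos c]
    have h2 : t * Real.exp c ≤ γ * t := by nlinarith
    linarith
  calc ∫ ω, (1 + ∑ i, X i ω) ^ ρ ∂μ ≤ (1 + c * q) ^ N := h_main
    _ ≤ Real.exp (c * s) := hpow
    _ ≤ 1 + s * (Real.exp c - 1) := hconv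
    _ ≤ 1 + γ * t := hfinal
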